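/- Let H ∈ (0,1). Then Θ(x) = x^{2H} + (1−2H)x² + o(x²) as x → 0⁺. In particular, Θ(x)/x^{2H} → 1 as x → 0⁺. -/

import Mathlib

open MeasureTheory Filter Set

/-- The function `Θ(x)` from the paper, for Hurst parameter `H`. -/
noncomputable def Theta (H : ℝ) (x : ℝ) : ℝ :=
  ∫ u in (0:ℝ)..1, ∫ s in (0:ℝ)..1,
    (x ^ (2*H) + 2 * u ^ (2*H) + |s - u + x| ^ (2*H)
      - (u + x) ^ (2*H) - |u - x| ^ (2*H) - |u - s| ^ (2*H))

noncomputable def phi (H t : ℝ) : ℝ := t * |t| ^ (2*H) / (2*H+1)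
noncomputable def psi (H t : ℝ) : ℝ := t * phi H t / (2*H+2)

lemma abs_rpow_eq (H t : ℝ) : |t| ^ (2*H) = (t^2) ^ H := by
  rw [Real.rpow_mul (abs_nonneg t), show ((2:ℝ)) = ((2:ℕ):ℝ) by norm_num,
    Real.rpow_natCast, sq_abs]

lemma continuous_absrpow' {p : ℝ} (hp : 0 ≤ p) : Continuous fun t : ℝ => |t| ^ p :=
  continuous_abs.rpow_const (fun t => Or.inr hp)

lemma continuous_absrpow {H : ℝ} (hH : 0 < H) : Continuous fun t : ℝ => |t| ^ (2*H) :=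
  continuous_absrpow' (by positivity)

lemma hasDerivAt_phi {H : ℝ} (hH : 0 < H) (t : ℝ) :
    HasDerivAt (phi H) (|t| ^ (2*H)) t := by
  have hb : (0:ℝ) < 2*H+1 := by linarith
  have key : HasDerivAt (fun t : ℝ => t * |t| ^ (2*H)) ((2*H+1) * |t| ^ (2*H)) t := by
    rcases eq_or_ne t 0 with rfl | ht
    · rw [hasDerivAt_iff_tendsto_slope]
      have hs : ∀ s : ℝ, s ≠ 0 → |s| ^ (2*H) = slope (fun t : ℝ => t * |t| ^ (2*H)) 0 s := by
        intro s hs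
        rw [slope_def_field]
        field_simp
        simp
      have h0 : (2*H+1) * |(0:ℝ)| ^ (2*H) = 0 := by
        simp [Real.zero_rpow (by positivity : 2*H ≠ 0)]
      rw [h0]
      have htd := ((continuous_absrpow hH).tendsto 0).mono_left
        (nhdsWithin_le_nhds (s := {(0:ℝ)}ᶜ))
      simp only [abs_zero, Real.zero_rpow (by positivity : 2*H ≠ 0)] at htd
      refine htd.congr' ?_
      filter_upwards [self_mem_nhdsWithin] with s hs'
      exact hs s hs'
    · have h2 : HasDerivAt (fun t : ℝ => (t^2) ^ H) (2*t * H * (t^2)^(H-1)) t := by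
        have := (hasDerivAt_pow 2 t).rpow_const (p := H) (Or.inl (by positivity))
        simpa using this
      have h3 : HasDerivAt (fun t : ℝ => t * (t^2) ^ H)
          (1 * (t^2)^H + t * (2*t * H * (t^2)^(H-1))) t := (hasDerivAt_id t).mul h2
      have heq : (fun t : ℝ => t * |t| ^ (2*H)) = fun t : ℝ => t * (t^2)^H := by
        funext s; rw [abs_rpow_eq]
      rw [heq, abs_rpow_eq]
      convert h3 using 1
      have h4 : (t^2)^(H-1) = (t^2)^H / t^2 := by
        rw [Real.rpow_sub (by positivity), Real.rpow_one]
      rw [h4]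
      field_simp
      ring
  have h5 := key.div_const (2*H+1)
  unfold phi
  exact h5.congr_deriv (mul_div_cancel_left₀ _ hb.ne')

lemma continuous_phi {H : ℝ} (hH : 0 < H) : Continuous (phi H) :=
  ((continuous_id.mul (continuous_absrpow hH)).div_const _)

lemma hasDerivAt_psi {H : ℝ} (hH : 0 < H) (t : ℝ) :
    HasDerivAt (psi H) (phi H t) t := by
  have hb : (0:ℝ) < 2*H+1 := by linarith
  have hg : (0:ℝ) < 2*H+2 := by linarith
  have h := ((hasDerivAt_id t).mul (hasDerivAt_phi hH t)).div_const (2*H+2)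
  unfold psi
  exact h.congr_deriv (by simp only [id, phi]; field_simp; ring)

lemma phi_neg (H t : ℝ) : phi H (-t) = - phi H t := by simp [phi, neg_div]
lemma psi_neg (H t : ℝ) : psi H (-t) = psi H t := by simp [psi, phi_neg]
lemma phi_nonneg_eq {H t : ℝ} (hH : 0 < H) (ht : 0 ≤ t) :
    phi H t = t ^ (2*H+1) / (2*H+1) := by
  rcases eq_or_lt_of_le ht with rfl | ht'
  · simp [phi, Real.zero_rpow (by positivity : 2*H+1 ≠ (0:ℝ))]
  · rw [phi, abs_of_nonneg ht, Real.rpow_add ht', Real.rpow_one]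
    ring_nf

lemma psi_nonneg_eq {H t : ℝ} (hH : 0 < H) (ht : 0 ≤ t) :
    psi H t = t ^ (2*H+2) / ((2*H+1)*(2*H+2)) := by
  rcases eq_or_lt_of_le ht with rfl | ht'
  · simp [psi, phi, Real.zero_rpow (by positivity : 2*H+2 ≠ (0:ℝ))]
  · rw [psi, phi_nonneg_eq hH ht, show 2*H+2 = (2*H+1)+1 by ring,
      Real.rpow_add ht' (2*H+1) 1, Real.rpow_one]
    field_simp

lemma integralA {H : ℝ} (hH : 0 < H) (a : ℝ) :
    ∫ s in (0:ℝ)..1, |s - a| ^ (2*H) = phi H (1-a) - phi H (-a) := by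
  have : ∀ s ∈ uIcc (0:ℝ) 1, HasDerivAt (fun s => phi H (s - a)) (|s - a| ^ (2*H)) s := by
    intro s _
    simpa [Function.comp_def] using (hasDerivAt_phi hH (s - a)).comp s ((hasDerivAt_id s).sub_const a)
  have hint : IntervalIntegrable (fun s : ℝ => |s - a| ^ (2*H)) volume 0 1 :=
    ((continuous_absrpow hH).comp (continuous_id.sub continuous_const)).intervalIntegrable 0 1
  have := intervalIntegral.integral_eq_sub_of_hasDerivAt this hint
  simpa using this

lemma integralB {H : ℝ} (hH : 0 < H) (c : ℝ) :
    ∫ u in (0:ℝ)..1, phi H (c - u) = psi H c - psi H (c - 1) := by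
  have : ∀ u ∈ uIcc (0:ℝ) 1, HasDerivAt (fun u => -psi H (c - u)) (phi H (c - u)) u := by
    intro u _
    have := ((hasDerivAt_psi hH (c - u)).comp u ((hasDerivAt_const u c).sub (hasDerivAt_id u))).neg
    simpa [Function.comp_def, Pi.neg_def] using this
  have hint : IntervalIntegrable (fun u : ℝ => phi H (c - u)) volume 0 1 :=
    ((continuous_phi hH).comp (continuous_const.sub continuous_id)).intervalIntegrable 0 1
  rw [intervalIntegral.integral_eq_sub_of_hasDerivAt this hint]
  norm_num
  ring

lemma inner_eq {H : ℝ} (hH : 0 < H) (x u : ℝ) :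
    ∫ s in (0:ℝ)..1,
      (x ^ (2*H) + 2 * u ^ (2*H) + |s - u + x| ^ (2*H)
        - (u + x) ^ (2*H) - |u - x| ^ (2*H) - |u - s| ^ (2*H))
    = (x ^ (2*H) + 2 * u ^ (2*H) - (u + x) ^ (2*H) - |u - x| ^ (2*H))
      + (phi H (1-(u-x)) - phi H (-(u-x))) - (phi H (1-u) - phi H (-u)) := by
  set C : ℝ := x ^ (2*H) + 2 * u ^ (2*H) - (u + x) ^ (2*H) - |u - x| ^ (2*H) with hCdef
  have h1 : IntervalIntegrable (fun s : ℝ => |s - (u-x)| ^ (2*H)) volume 0 1 :=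
    ((continuous_absrpow hH).comp (continuous_id.sub continuous_const)).intervalIntegrable 0 1
  have h2 : IntervalIntegrable (fun s : ℝ => |s - u| ^ (2*H)) volume 0 1 :=
    ((continuous_absrpow hH).comp (continuous_id.sub continuous_const)).intervalIntegrable 0 1
  have hC : IntervalIntegrable (fun _ : ℝ => C) volume 0 1 := intervalIntegrable_const
  have hcong : ∫ s in (0:ℝ)..1,
      (x ^ (2*H) + 2 * u ^ (2*H) + |s - u + x| ^ (2*H)
        - (u + x) ^ (2*H) - |u - x| ^ (2*H) - |u - s| ^ (2*H))
      = ∫ s in (0:ℝ)..1, (C + |s - (u-x)| ^ (2*H) - |s - u| ^ (2*H)) := by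
    apply intervalIntegral.integral_congr
    intro s _
    dsimp only
    have e1 : s - u + x = s - (u - x) := by ring
    rw [e1, abs_sub_comm u s, hCdef]
    ring
  rw [hcong]
  rw [intervalIntegral.integral_sub (hC.add h1) h2, intervalIntegral.integral_add hC h1,
    intervalIntegral.integral_const, integralA hH (u-x), integralA hH u]
  simp

lemma psi_zero (H : ℝ) : psi H 0 = 0 := by simp [psi]

lemma theta_eq {H : ℝ} (hH : 0 < H) {x : ℝ} (hx : 0 < x) :
    Theta H x = x ^ (2*H) + 2/(2*H+1) - phi H (1+x) - phi H (1-x)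
      + psi H (1+x) + psi H (1-x) - 2 * psi H x - 2 * psi H 1 := by
  have h0 : Theta H x = ∫ u in (0:ℝ)..1,
      ((x ^ (2*H) + 2 * u ^ (2*H) - (u + x) ^ (2*H) - |u - x| ^ (2*H))
        + (phi H (1-(u-x)) - phi H (-(u-x))) - (phi H (1-u) - phi H (-u))) :=
    intervalIntegral.integral_congr fun u _ => inner_eq hH x u
  -- integrability of the pieces
  have hi1 : IntervalIntegrable (fun _ : ℝ => x ^ (2*H)) volume 0 1 := intervalIntegrable_const
  have hi2 : IntervalIntegrable (fun u : ℝ => 2 * u ^ (2*H)) volume 0 1 := by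
    apply ContinuousOn.intervalIntegrable
    exact (continuousOn_const.mul (continuousOn_id.rpow_const fun u _ => Or.inr (by positivity)))
  have hi3 : IntervalIntegrable (fun u : ℝ => (u + x) ^ (2*H)) volume 0 1 := by
    apply ContinuousOn.intervalIntegrable
    exact ((continuousOn_id.add continuousOn_const).rpow_const fun u _ => Or.inr (by positivity))
  have hi4 : IntervalIntegrable (fun u : ℝ => |u - x| ^ (2*H)) volume 0 1 :=
    ((continuous_absrpow hH).comp (continuous_id.sub continuous_const)).intervalIntegrable 0 1
  have hic : ∀ c : ℝ, IntervalIntegrable (fun u : ℝ => phi H (c - u)) volume 0 1 := fun c =>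
    ((continuous_phi hH).comp (continuous_const.sub continuous_id)).intervalIntegrable 0 1
  have hi5 : IntervalIntegrable (fun u : ℝ => phi H (1-(u-x))) volume 0 1 :=
    ((continuous_phi hH).comp (by continuity)).intervalIntegrable 0 1
  have hi6 : IntervalIntegrable (fun u : ℝ => phi H (-(u-x))) volume 0 1 :=
    ((continuous_phi hH).comp (by continuity)).intervalIntegrable 0 1
  have hi7 : IntervalIntegrable (fun u : ℝ => phi H (1-u)) volume 0 1 := hic 1
  have hi8 : IntervalIntegrable (fun u : ℝ => phi H (-u)) volume 0 1 :=
    ((continuous_phi hH).comp (by continuity)).intervalIntegrable 0 1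
  have hA : IntervalIntegrable
      (fun u : ℝ => x ^ (2*H) + 2 * u ^ (2*H) - (u + x) ^ (2*H) - |u - x| ^ (2*H)) volume 0 1 :=
    ((hi1.add hi2).sub hi3).sub hi4
  have hB : IntervalIntegrable (fun u : ℝ => phi H (1-(u-x)) - phi H (-(u-x))) volume 0 1 :=
    hi5.sub hi6
  have hCc : IntervalIntegrable (fun u : ℝ => phi H (1-u) - phi H (-u)) volume 0 1 := hi7.sub hi8
  -- atomic values
  have v1 : ∫ _u in (0:ℝ)..1, x ^ (2*H) = x ^ (2*H) := by
    rw [intervalIntegral.integral_const]; simp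
  have v2 : ∫ u in (0:ℝ)..1, 2 * u ^ (2*H) = 2 / (2*H+1) := by
    rw [intervalIntegral.integral_const_mul, integral_rpow (Or.inl (by linarith))]
    rw [Real.one_rpow, Real.zero_rpow (by positivity)]
    ring
  have v3 : ∫ u in (0:ℝ)..1, (u + x) ^ (2*H) = phi H (1+x) - phi H x := by
    have hd : ∀ u ∈ uIcc (0:ℝ) 1, HasDerivAt (fun u => phi H (u + x)) ((u + x) ^ (2*H)) u := by
      intro u hu
      rw [uIcc_of_le (by norm_num : (0:ℝ) ≤ 1)] at hu
      have h := (hasDerivAt_phi hH (u + x)).comp u ((hasDerivAt_id u).add_const x)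
      have hpos : 0 < u + x := by have := hu.1; linarith
      simpa [abs_of_pos hpos, Function.comp_def] using h
    have := intervalIntegral.integral_eq_sub_of_hasDerivAt hd hi3
    simpa using this
  have v4 : ∫ u in (0:ℝ)..1, |u - x| ^ (2*H) = phi H (1-x) - phi H (-x) := integralA hH x
  have v5 : ∫ u in (0:ℝ)..1, phi H (1-(u-x)) = psi H (1+x) - psi H x := by
    have hc : ∫ u in (0:ℝ)..1, phi H (1-(u-x)) = ∫ u in (0:ℝ)..1, phi H ((1+x) - u) :=
      intervalIntegral.integral_congr fun u _ => by rw [show 1-(u-x) = (1+x)-u by ring]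
    rw [hc, integralB hH (1+x), show (1+x)-1 = x by ring]
  have v6 : ∫ u in (0:ℝ)..1, phi H (-(u-x)) = psi H x - psi H (1-x) := by
    have hc : ∫ u in (0:ℝ)..1, phi H (-(u-x)) = ∫ u in (0:ℝ)..1, phi H (x - u) :=
      intervalIntegral.integral_congr fun u _ => by rw [show -(u-x) = x-u by ring]
    rw [hc, integralB hH x, show x-1 = -(1-x) by ring, psi_neg]
  have v7 : ∫ u in (0:ℝ)..1, phi H (1-u) = psi H 1 := by
    rw [integralB hH 1]; simp [psi_zero]
  have v8 : ∫ u in (0:ℝ)..1, phi H (-u) = - psi H 1 := by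
    have hc : ∫ u in (0:ℝ)..1, phi H (-u) = ∫ u in (0:ℝ)..1, phi H (0 - u) :=
      intervalIntegral.integral_congr fun u _ => by norm_num
    rw [hc, integralB hH 0, psi_zero, show (0:ℝ)-1 = -1 by ring, psi_neg]
    ring
  rw [h0, intervalIntegral.integral_sub (hA.add hB) hCc, intervalIntegral.integral_add hA hB,
    intervalIntegral.integral_sub ((hi1.add hi2).sub hi3) hi4,
    intervalIntegral.integral_sub (hi1.add hi2) hi3,
    intervalIntegral.integral_add hi1 hi2,
    intervalIntegral.integral_sub hi5 hi6, intervalIntegral.integral_sub hi7 hi8,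
    v1, v2, v3, v4, v5, v6, v7, v8, phi_neg]
  ring

noncomputable def FF (H y : ℝ) : ℝ :=
  2/(2*H+1) - phi H (1+y) - phi H (1-y) + psi H (1+y) + psi H (1-y) - 2 * psi H 1

noncomputable def FF' (H y : ℝ) : ℝ :=
  -|1+y| ^ (2*H) + |1-y| ^ (2*H) + phi H (1+y) - phi H (1-y)

lemma hasDerivAt_comp_const_add {f : ℝ → ℝ} {f' : ℝ} {c y : ℝ}
    (h : HasDerivAt f f' (c + y)) : HasDerivAt (fun y => f (c + y)) f' y := by
  simpa [Function.comp_def] using h.comp y ((hasDerivAt_id y).const_add c)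

lemma hasDerivAt_comp_const_sub {f : ℝ → ℝ} {f' : ℝ} {c y : ℝ}
    (h : HasDerivAt f f' (c - y)) : HasDerivAt (fun y => f (c - y)) (-f') y := by
  simpa [Function.comp_def] using h.comp y ((hasDerivAt_id y).const_sub c)

lemma hasDerivAt_FF {H : ℝ} (hH : 0 < H) (y : ℝ) : HasDerivAt (FF H) (FF' H y) y := by
  have h1 : HasDerivAt (fun y => phi H (1+y)) (|1+y| ^ (2*H)) y :=
    hasDerivAt_comp_const_add (hasDerivAt_phi hH (1+y))
  have h2 : HasDerivAt (fun y => phi H (1-y)) (-(|1-y| ^ (2*H))) y :=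
    hasDerivAt_comp_const_sub (hasDerivAt_phi hH (1-y))
  have h3 : HasDerivAt (fun y => psi H (1+y)) (phi H (1+y)) y :=
    hasDerivAt_comp_const_add (hasDerivAt_psi hH (1+y))
  have h4 : HasDerivAt (fun y => psi H (1-y)) (-(phi H (1-y))) y :=
    hasDerivAt_comp_const_sub (hasDerivAt_psi hH (1-y))
  have := ((((((hasDerivAt_const y (2/(2*H+1))).sub h1).sub h2).add h3).add h4).sub
    (hasDerivAt_const y (2 * psi H 1)))
  unfold FF FF'
  exact this.congr_deriv (by ring)

lemma phi_one {H : ℝ} : phi H 1 = 1/(2*H+1) := by simp [phi]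

lemma FF_zero {H : ℝ} : FF H 0 = 0 := by
  simp [FF, phi_one]
  ring

lemma FF'_zero {H : ℝ} : FF' H 0 = 0 := by
  simp [FF']

lemma hasDerivAt_FF'_zero {H : ℝ} (hH : 0 < H) : HasDerivAt (FF' H) (2 - 4*H) 0 := by
  have hev : ∀ᶠ y in nhds (0:ℝ), -1 < y := eventually_gt_nhds (by norm_num)
  have habs1 : HasDerivAt (fun y : ℝ => |1+y| ^ (2*H)) (2*H) 0 := by
    have hr : HasDerivAt (fun t : ℝ => t ^ (2*H)) (2*H * (1:ℝ) ^ (2*H-1)) 1 :=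
      Real.hasDerivAt_rpow_const (Or.inl one_ne_zero)
    have h := hasDerivAt_comp_const_add (c := 1) (y := (0:ℝ)) (by simpa using hr)
    refine h.congr_of_eventuallyEq ?_ |>.congr_deriv (by simp [Real.one_rpow])
    filter_upwards [hev] with y hy
    rw [abs_of_pos (by linarith)]
  have habs2 : HasDerivAt (fun y : ℝ => |1-y| ^ (2*H)) (-(2*H)) 0 := by
    have hr : HasDerivAt (fun t : ℝ => t ^ (2*H)) (2*H * (1:ℝ) ^ (2*H-1)) 1 :=
      Real.hasDerivAt_rpow_const (Or.inl one_ne_zero)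
    have h := hasDerivAt_comp_const_sub (c := 1) (y := (0:ℝ)) (by simpa using hr)
    refine HasDerivAt.congr_deriv (h.congr_of_eventuallyEq ?_) (by simp [Real.one_rpow])
    filter_upwards [eventually_lt_nhds (show (0:ℝ) < 1 by norm_num)] with y hy
    rw [abs_of_pos (by linarith)]
  have h3 : HasDerivAt (fun y => phi H (1+y)) (|1+(0:ℝ)| ^ (2*H)) 0 :=
    hasDerivAt_comp_const_add (hasDerivAt_phi hH (1+0))
  have h4 : HasDerivAt (fun y => phi H (1-y)) (-(|1-(0:ℝ)| ^ (2*H))) 0 :=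
    hasDerivAt_comp_const_sub (hasDerivAt_phi hH (1-0))
  have := ((habs1.neg.add habs2).add h3).sub h4
  unfold FF'
  exact this.congr_deriv (by norm_num [Real.one_rpow]; ring)

lemma tendsto_FF_div_sq {H : ℝ} (hH : 0 < H) :
    Tendsto (fun y : ℝ => FF H y / y^2) (nhdsWithin 0 (Set.Ioi 0)) (nhds (1 - 2*H)) := by
  apply HasDerivAt.lhopital_zero_right_on_Ioo (f' := FF' H) (g' := fun y => 2*y)
    (b := 1) one_pos
  · exact fun y _ => hasDerivAt_FF hH y
  · intro y _
    simpa [Pi.pow_def] using ((hasDerivAt_id y).const_mul 1).pow 2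
  · intro y hy
    have := hy.1
    positivity
  · have : ContinuousAt (FF H) 0 := (hasDerivAt_FF hH 0).continuousAt
    have h := this.tendsto.mono_left (nhdsWithin_le_nhds (s := Set.Ioi (0:ℝ)))
    rwa [FF_zero] at h
  · have : Tendsto (fun y : ℝ => y^2) (nhds 0) (nhds 0) := by
      simpa using (continuous_pow 2).tendsto (0:ℝ)
    exact this.mono_left nhdsWithin_le_nhds
  · -- F'(y)/(2y) → 1 - 2H
    have hslope := hasDerivAt_iff_tendsto_slope.mp (hasDerivAt_FF'_zero hH)
    have hs2 : Tendsto (fun y : ℝ => FF' H y / y) (nhdsWithin 0 (Set.Ioi 0)) (nhds (2 - 4*H)) := by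
      have hmono : nhdsWithin (0:ℝ) (Set.Ioi 0) ≤ nhdsWithin 0 {(0:ℝ)}ᶜ :=
        nhdsWithin_mono 0 (fun y hy => ne_of_gt hy)
      refine (hslope.mono_left hmono).congr' ?_
      filter_upwards [self_mem_nhdsWithin] with y hy
      rw [slope_def_field, FF'_zero]
      ring_nf
    rw [show (1 - 2*H : ℝ) = (2 - 4*H)/2 by ring]
    refine (hs2.div_const 2).congr' ?_
    filter_upwards with y
    rw [div_div, mul_comm y 2]

lemma tendsto_psi_div_sq {H : ℝ} (hH : 0 < H) :
    Tendsto (fun y : ℝ => psi H y / y^2) (nhdsWithin 0 (Set.Ioi 0)) (nhds 0) := by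
  have h1 : Tendsto (fun y : ℝ => |y| ^ (2*H) / ((2*H+1)*(2*H+2))) (nhds 0) (nhds 0) := by
    have := ((continuous_absrpow hH).div_const ((2*H+1)*(2*H+2))).tendsto 0
    simpa [Real.zero_rpow (by positivity : 2*H ≠ (0:ℝ))] using this
  refine (h1.mono_left (nhdsWithin_le_nhds (s := Set.Ioi (0:ℝ)))).congr' ?_
  filter_upwards [self_mem_nhdsWithin] with y hy
  have hy0 : (0:ℝ) < y := hy
  rw [psi, phi, abs_of_pos hy0]
  field_simp

theorem stmt6 (H : ℝ) (hH : H ∈ Set.Ioo (0:ℝ) 1) :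
    Tendsto (fun x : ℝ => (Theta H x - (x ^ (2*H) + (1 - 2*H) * x ^ 2)) / x ^ 2)
        (nhdsWithin 0 (Set.Ioi 0)) (nhds 0) ∧
    Tendsto (fun x : ℝ => Theta H x / x ^ (2*H)) (nhdsWithin 0 (Set.Ioi 0)) (nhds 1) := by
  obtain ⟨h0, h1⟩ := hH
  have main1 : Tendsto (fun x : ℝ => (Theta H x - (x ^ (2*H) + (1 - 2*H) * x ^ 2)) / x ^ 2)
      (nhdsWithin 0 (Set.Ioi 0)) (nhds 0) := by
    have hlim := (tendsto_FF_div_sq h0).sub ((tendsto_psi_div_sq h0).const_mul 2)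
    have hlim2 := hlim.sub_const (1 - 2*H)
    norm_num at hlim2
    refine hlim2.congr' ?_
    filter_upwards [self_mem_nhdsWithin] with x hx
    have hx0 : (0:ℝ) < x := hx
    have hx2 : x^2 ≠ 0 := by positivity
    rw [theta_eq h0 hx0]
    simp only [FF]
    field_simp
    ring
  refine ⟨main1, ?_⟩
  have hx22H : Tendsto (fun x : ℝ => x ^ (2 - 2*H)) (nhdsWithin 0 (Set.Ioi 0)) (nhds 0) := by
    have h2 : Tendsto (fun y : ℝ => |y| ^ (2-2*H)) (nhds 0) (nhds 0) := by
      have := (continuous_absrpow' (by linarith : (0:ℝ) ≤ 2-2*H)).tendsto 0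
      simpa [abs_zero, Real.zero_rpow (show 2-2*H ≠ (0:ℝ) by intro h; nlinarith)] using this
    refine (h2.mono_left (nhdsWithin_le_nhds (s := Set.Ioi (0:ℝ)))).congr' ?_
    filter_upwards [self_mem_nhdsWithin] with y hy
    rw [abs_of_pos (show (0:ℝ) < y from hy)]
  have hcomb := ((main1.add_const (1 - 2*H)).mul hx22H).add_const 1
  norm_num at hcomb
  refine hcomb.congr' ?_
  filter_upwards [self_mem_nhdsWithin] with x hx
  have hx0 : (0:ℝ) < x := hx
  have hk : x ^ (2*H) ≠ 0 := (Real.rpow_pos_of_pos hx0 _).ne'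
  have hx2 : (x:ℝ)^2 ≠ 0 := by positivity
  have key : x ^ (2 - 2*H) = x^2 / x ^ (2*H) := by
    rw [eq_div_iff hk, ← Real.rpow_add hx0]
    norm_num
  rw [key]
  field_simp
  ring
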